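/- Let V be a real vector space of dimension ℓ, and let 𝒫₁, 𝒫₂ be m-dimensional subspaces of V with 1 ≤ m ≤ ℓ. Assume there exist nonzero simple m-vectors t₁, t₂ ∈ Λ_m V with Span(t₁) = 𝒫₁ and Span(t₂) = 𝒫₂ such that t₁ − t₂ is a simple m-vector. Then dim(𝒫₁ ∩ 𝒫₂) ≥ m − 1. -/

import Mathlib

open Module

open ExteriorAlgebra in
/-- If `v` is linearly independent, `ιMulti ℝ n v ≠ 0`. -/
lemma aux_iMulti_ne_zero {V : Type*} [AddCommGroup V] [Module ℝ V] [FiniteDimensional ℝ V]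
    {n : ℕ} {v : Fin n → V} (hv : LinearIndependent ℝ v) :
    ExteriorAlgebra.ιMulti ℝ n v ≠ 0 := by
  classical
  set W := Submodule.span ℝ (Set.range v)
  let bW : Basis (Fin n) ℝ W := Basis.span hv
  obtain ⟨W', hc⟩ := Submodule.exists_isCompl W
  let proj : V →ₗ[ℝ] W := W.linearProjOfIsCompl W' hc
  let φ : V →ₗ[ℝ] (Fin n → ℝ) := bW.equivFun.toLinearMap ∘ₗ proj
  let f : V [⋀^Fin n]→ₗ[ℝ] ℝ := ((Pi.basisFun ℝ (Fin n)).det).compLinearMap φ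
  let F : ∀ i, V [⋀^Fin i]→ₗ[ℝ] ℝ := Pi.single n f
  intro h
  have h1 : liftAlternating (R := ℝ) F (ExteriorAlgebra.ιMulti ℝ n v) = f v := by
    rw [liftAlternating_apply_ιMulti]
    simp [F]
  rw [h, map_zero] at h1
  have hφ : φ ∘ v = ⇑(Pi.basisFun ℝ (Fin n)) := by
    funext j
    have hmem : v j ∈ W := Submodule.subset_span ⟨j, rfl⟩
    have hproj : proj (v j) = ⟨v j, hmem⟩ :=
      Submodule.linearProjOfIsCompl_apply_left hc ⟨v j, hmem⟩
    have hbw : bW j = (⟨v j, hmem⟩ : W) := Basis.span_apply hv j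
    simp only [φ, LinearMap.coe_comp, Function.comp_apply, hproj, ← hbw,
      LinearEquiv.coe_coe, Basis.equivFun_apply, Basis.repr_self]
    funext i
    simp [Pi.basisFun_apply, Finsupp.single_apply, Pi.single_apply, eq_comm]
  have h2 : f v = 1 := by
    show (Pi.basisFun ℝ (Fin n)).det (φ ∘ v) = 1
    rw [hφ, Basis.det_self]
  rw [h2] at h1
  exact one_ne_zero h1.symm

open ExteriorAlgebra in
/-- If `ιMulti ℝ n v ≠ 0` then `v` is linearly independent. -/
lemma aux_linearIndependent_of_ne_zero {V : Type*} [AddCommGroup V] [Module ℝ V]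
    {n : ℕ} {v : Fin n → V} (h : ExteriorAlgebra.ιMulti ℝ n v ≠ 0) :
    LinearIndependent ℝ v := by
  by_contra hdep
  exact h ((ExteriorAlgebra.ιMulti ℝ n).map_linearDependent v hdep)

open ExteriorAlgebra in
/-- The annihilator of a nonzero simple `n`-vector is the span of its factors. -/
lemma aux_ann_eq_span {V : Type*} [AddCommGroup V] [Module ℝ V] [FiniteDimensional ℝ V]
    {n : ℕ} {v : Fin n → V} (hv : LinearIndependent ℝ v) (w : V) :
    ExteriorAlgebra.ι ℝ w * ExteriorAlgebra.ιMulti ℝ n v = 0 ↔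
      w ∈ Submodule.span ℝ (Set.range v) := by
  constructor
  · intro h
    by_contra hw
    have hcons : LinearIndependent ℝ (Fin.cons w v) :=
      linearIndependent_fin_cons.2 ⟨hv, hw⟩
    apply aux_iMulti_ne_zero hcons
    rw [ExteriorAlgebra.ιMulti_succ_apply]
    simpa [show Matrix.vecTail (Fin.cons w v : Fin (n+1) → V) = v from funext fun i => by simp [Matrix.vecTail]] using h
  · intro hw
    -- the map `u ↦ ι u * t` is linear, vanishes on each `v i`
    have key : ∀ u ∈ Submodule.span ℝ (Set.range v),
        ExteriorAlgebra.ι ℝ u * ExteriorAlgebra.ιMulti ℝ n v = 0 := by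
      intro u hu
      have : u ∈ LinearMap.ker ((LinearMap.mulRight ℝ (ExteriorAlgebra.ιMulti ℝ n v)) ∘ₗ
          ExteriorAlgebra.ι ℝ) := by
        refine Submodule.span_le.2 ?_ hu
        rintro _ ⟨i, rfl⟩
        simp only [SetLike.mem_coe, LinearMap.mem_ker, LinearMap.coe_comp,
          Function.comp_apply, LinearMap.mulRight_apply]
        rw [ExteriorAlgebra.ιMulti_apply]
        exact ExteriorAlgebra.ι_mul_prod_list v i
      simpa using this
    exact key w hw

/-- Let `V` be a real vector space of dimension `ℓ` and let `𝒫₁, 𝒫₂` be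
`m`-dimensional subspaces of `V` (`1 ≤ m ≤ ℓ`).  Suppose there are nonzero simple `m`-vectors
`t₁, t₂ ∈ Λ_m V` with `Span tᵢ = 𝒫ᵢ` (where `Span t = {v : v ∧ t = 0}`) such that `t₁ - t₂` is
simple.  Then `dim (𝒫₁ ∩ 𝒫₂) ≥ m - 1`. -/
theorem rank_one_connected_of_simple_difference
    (V : Type*) [AddCommGroup V] [Module ℝ V] [FiniteDimensional ℝ V]
    (ℓ m : ℕ) (hV : finrank ℝ V = ℓ) (hm : 1 ≤ m) (hmℓ : m ≤ ℓ)
    (P₁ P₂ : Submodule ℝ V) (hP₁ : finrank ℝ P₁ = m) (hP₂ : finrank ℝ P₂ = m)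
    (t₁ t₂ : ExteriorAlgebra ℝ V)
    (ht₁ : ∃ v : Fin m → V, t₁ = ExteriorAlgebra.ιMulti ℝ m v) (ht₁0 : t₁ ≠ 0)
    (ht₂ : ∃ v : Fin m → V, t₂ = ExteriorAlgebra.ιMulti ℝ m v) (ht₂0 : t₂ ≠ 0)
    (hspan₁ : ∀ v : V, v ∈ P₁ ↔ ExteriorAlgebra.ι ℝ v * t₁ = 0)
    (hspan₂ : ∀ v : V, v ∈ P₂ ↔ ExteriorAlgebra.ι ℝ v * t₂ = 0)
    (hdiff : ∃ v : Fin m → V, t₁ - t₂ = ExteriorAlgebra.ιMulti ℝ m v) :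
    m - 1 ≤ finrank ℝ ↥(P₁ ⊓ P₂) := by
  by_contra hk
  push_neg at hk
  set k := finrank ℝ ↥(P₁ ⊓ P₂) with hkdef
  -- so k + 2 ≤ m
  have hk2 : k + 2 ≤ m := by omega
  by_cases heq : t₁ = t₂
  · -- then P₁ = P₂
    have hPeq : P₁ = P₂ := by
      ext v; rw [hspan₁, hspan₂, heq]
    have : k = m := by rw [hkdef, hPeq, inf_idem, hP₂]
    omega
  · obtain ⟨c, hc⟩ := hdiff
    obtain ⟨a, ha⟩ := ht₁
    obtain ⟨b, hb⟩ := ht₂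
    have hs0 : ExteriorAlgebra.ιMulti ℝ m c ≠ 0 := by
      rw [← hc]; exact sub_ne_zero.2 heq
    have hcind : LinearIndependent ℝ c := aux_linearIndependent_of_ne_zero hs0
    -- Claim: span of c is contained in P₁ ⊓ P₂
    have hQle : Submodule.span ℝ (Set.range c) ≤ P₁ ⊓ P₂ := by
      intro w hw
      have hws : ExteriorAlgebra.ι ℝ w * (t₁ - t₂) = 0 := by
        rw [hc]; exact (aux_ann_eq_span hcind w).2 hw
      have hweq : ExteriorAlgebra.ι ℝ w * t₁ = ExteriorAlgebra.ι ℝ w * t₂ := by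
        have := hws; rw [mul_sub, sub_eq_zero] at this; exact this
      -- let the common value be shown to be 0
      have hx0 : ExteriorAlgebra.ι ℝ w * t₁ = 0 := by
        by_contra hxne
        have htail : Matrix.vecTail (Fin.cons w a) = a := by
          funext i; simp [Matrix.vecTail]
        have hxsimple : ExteriorAlgebra.ι ℝ w * t₁
            = ExteriorAlgebra.ιMulti ℝ (m + 1) (Fin.cons w a) := by
          rw [ExteriorAlgebra.ιMulti_succ_apply, htail, Fin.cons_zero, ha]
        have hind : LinearIndependent ℝ (Fin.cons w a) := by
          apply aux_linearIndependent_of_ne_zero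
          rw [← hxsimple]; exact hxne
        -- P₁ ⊔ P₂ is contained in the annihilator of x
        have hann : ∀ u ∈ P₁ ⊔ P₂, ExteriorAlgebra.ι ℝ u * (ExteriorAlgebra.ι ℝ w * t₁) = 0 := by
          have h1 : ∀ u ∈ P₁, ExteriorAlgebra.ι ℝ u * (ExteriorAlgebra.ι ℝ w * t₁) = 0 := by
            intro u hu
            have h0 : ExteriorAlgebra.ι ℝ u * t₁ = 0 := (hspan₁ u).1 hu
            have hswap : ExteriorAlgebra.ι ℝ u * ExteriorAlgebra.ι ℝ w
                = - (ExteriorAlgebra.ι ℝ w * ExteriorAlgebra.ι ℝ u) :=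
              eq_neg_of_add_eq_zero_left (ExteriorAlgebra.ι_add_mul_swap u w)
            rw [← mul_assoc, hswap, neg_mul, mul_assoc, h0, mul_zero, neg_zero]
          have h2 : ∀ u ∈ P₂, ExteriorAlgebra.ι ℝ u * (ExteriorAlgebra.ι ℝ w * t₁) = 0 := by
            intro u hu
            have h0 : ExteriorAlgebra.ι ℝ u * t₂ = 0 := (hspan₂ u).1 hu
            have hswap : ExteriorAlgebra.ι ℝ u * ExteriorAlgebra.ι ℝ w
                = - (ExteriorAlgebra.ι ℝ w * ExteriorAlgebra.ι ℝ u) :=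
              eq_neg_of_add_eq_zero_left (ExteriorAlgebra.ι_add_mul_swap u w)
            rw [hweq, ← mul_assoc, hswap, neg_mul, mul_assoc, h0, mul_zero, neg_zero]
          intro u hu
          have : u ∈ LinearMap.ker ((LinearMap.mulRight ℝ (ExteriorAlgebra.ι ℝ w * t₁)) ∘ₗ ExteriorAlgebra.ι ℝ) := by
            refine (sup_le (fun y hy => ?_) (fun y hy => ?_) : P₁ ⊔ P₂ ≤ _) hu
            · simp only [SetLike.mem_coe, LinearMap.mem_ker, LinearMap.coe_comp,
                Function.comp_apply, LinearMap.mulRight_apply]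
              exact h1 y hy
            · simp only [SetLike.mem_coe, LinearMap.mem_ker, LinearMap.coe_comp,
                Function.comp_apply, LinearMap.mulRight_apply]
              exact h2 y hy
          simpa [mul_assoc] using this
        -- hence P₁ ⊔ P₂ ≤ span of (m+1) vectors
        have hle : P₁ ⊔ P₂ ≤ Submodule.span ℝ (Set.range (Fin.cons w a : Fin (m+1) → V)) := by
          intro u hu
          have := hann u hu
          rw [hxsimple] at this
          exact (aux_ann_eq_span hind u).1 this
        have hdim1 : finrank ℝ (Submodule.span ℝ (Set.range (Fin.cons w a : Fin (m+1) → V)))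
            = m + 1 := by simpa using finrank_span_eq_card hind
        have hdim2 : finrank ℝ ↥(P₁ ⊔ P₂) + k = m + m := by
          rw [hkdef, Submodule.finrank_sup_add_finrank_inf_eq, hP₁, hP₂]
        have hmono : finrank ℝ ↥(P₁ ⊔ P₂) ≤ m + 1 := by
          rw [← hdim1]; exact Submodule.finrank_mono hle
        omega
      rw [Submodule.mem_inf]
      constructor
      · exact (hspan₁ w).2 hx0
      · exact (hspan₂ w).2 (hweq ▸ hx0)
    -- span of c has dimension m
    have hdimQ : finrank ℝ (Submodule.span ℝ (Set.range c)) = m := by simpa using finrank_span_eq_card hcind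
    have := Submodule.finrank_mono hQle
    rw [hdimQ, ← hkdef] at this
    omega
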